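/- arXiv:2510.02386 — 3 statements merged into one kernel-verified Lean document; each statement's English description precedes it below -/
import Mathlib

section
/- In the tabular softmax trajectory model, fix logits z : 𝒮 × 𝒜 → ℝ, a direction v : 𝒮 × 𝒜 → ℝ, and a nonempty event E ⊆ 𝒜^T. Then the function η ↦ E_{P_{z+ηv}}[ℓ_{z+ηv} | E] is differentiable at η = 0, with derivative equal to −E_{P_z}[(1/T)·Ψ_{z,v} | E] + Cov_{P_z(·|E)}(ℓ_z, Ψ_{z,v}). -/
open Finset Filter Asymptotics

noncomputable section

/-- Softmax policy: probability of action `a` in state `s` under logits `z`. -/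
def pol {S A : Type*} [Fintype A] (z : S × A → ℝ) (s : S) (a : A) : ℝ :=
  Real.exp (z (s, a)) / ∑ b : A, Real.exp (z (s, b))

/-- State reached after `n` steps of the deterministic dynamics `δ` from `s0`,
taking actions `y 0, y 1, …`. -/
def stateAt {S A : Type*} (δ : S → A → S) (s0 : S) (y : ℕ → A) : ℕ → S
  | 0 => s0
  | n + 1 => δ (stateAt δ s0 y n) (y n)

/-- State `s_t(y)` from which the `t`-th action of the trajectory `y` is taken. -/
def st {S A : Type*} (δ : S → A → S) (s0 : S) {T : ℕ} (y : Fin T → A) (t : Fin T) : S :=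
  stateAt δ s0 (fun n => if h : n < T then y ⟨n, h⟩ else y t) t.val

/-- Trajectory probability `P_z(y) = ∏_t π_z(a_t | s_t(y))`. -/
def traj {S A : Type*} [Fintype A] (δ : S → A → S) (s0 : S) {T : ℕ}
    (z : S × A → ℝ) (y : Fin T → A) : ℝ :=
  ∏ t : Fin T, pol z (st δ s0 y t) (y t)

/-- Per-token negative log-likelihood `ℓ_z(y)`. -/
def nll {S A : Type*} [Fintype A] (δ : S → A → S) (s0 : S) {T : ℕ}
    (z : S × A → ℝ) (y : Fin T → A) : ℝ :=
  -(1 / (T : ℝ)) * ∑ t : Fin T, Real.log (pol z (st δ s0 y t) (y t))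

/-- Centered direction `ṽ_z(s,a) = v(s,a) − ∑_b π_z(b|s) v(s,b)`. -/
def centered {S A : Type*} [Fintype A] (z v : S × A → ℝ) (s : S) (a : A) : ℝ :=
  v (s, a) - ∑ b : A, pol z s b * v (s, b)

/-- Trajectory score `Ψ_{z,v}(y) = ∑_t ṽ_z(s_t(y), a_t)`. -/
def score {S A : Type*} [Fintype A] (δ : S → A → S) (s0 : S) {T : ℕ}
    (z v : S × A → ℝ) (y : Fin T → A) : ℝ :=
  ∑ t : Fin T, centered z v (st δ s0 y t) (y t)

/-- Conditional expectation `E_{P_z}[f | E]`. -/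
def condExp {S A : Type*} [Fintype A] (δ : S → A → S) (s0 : S) {T : ℕ}
    (z : S × A → ℝ) (E : Finset (Fin T → A)) (f : (Fin T → A) → ℝ) : ℝ :=
  (∑ y ∈ E, traj δ s0 z y * f y) / ∑ y ∈ E, traj δ s0 z y

/-- Conditional covariance `Cov_{P_z(·|E)}(f, g)`. -/
def condCov {S A : Type*} [Fintype A] (δ : S → A → S) (s0 : S) {T : ℕ}
    (z : S × A → ℝ) (E : Finset (Fin T → A)) (f g : (Fin T → A) → ℝ) : ℝ :=
  condExp δ s0 z E (fun y => f y * g y) - condExp δ s0 z E f * condExp δ s0 z E g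


section AuxProof

variable {S A : Type*} [Fintype A] [Nonempty A]

lemma den_pos (z : S × A → ℝ) (s : S) : 0 < ∑ b : A, Real.exp (z (s, b)) :=
  Finset.sum_pos (fun b _ => Real.exp_pos _) Finset.univ_nonempty

lemma pol_pos (z : S × A → ℝ) (s : S) (a : A) : 0 < pol z s a :=
  div_pos (Real.exp_pos _) (den_pos z s)

lemma traj_pos {T : ℕ} (δ : S → A → S) (s0 : S) (z : S × A → ℝ) (y : Fin T → A) :
    0 < traj δ s0 z y :=
  Finset.prod_pos fun t _ => pol_pos z _ _

lemma hasDerivAt_pol (z v : S × A → ℝ) (s : S) (a : A) :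
    HasDerivAt (fun η : ℝ => pol (z + η • v) s a) (pol z s a * centered z v s a) 0 := by
  have hnum : HasDerivAt (fun η : ℝ => Real.exp (z (s, a) + η * v (s, a)))
      (Real.exp (z (s, a)) * v (s, a)) 0 := by
    have h1 : HasDerivAt (fun η : ℝ => z (s, a) + η * v (s, a)) (v (s, a)) 0 := by
      simpa using ((hasDerivAt_id (0:ℝ)).mul_const (v (s, a))).const_add (z (s, a))
    simpa using h1.exp
  have hden : HasDerivAt (fun η : ℝ => ∑ b : A, Real.exp (z (s, b) + η * v (s, b)))
      (∑ b : A, Real.exp (z (s, b)) * v (s, b)) 0 := by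
    apply HasDerivAt.fun_sum
    intro b _
    have h1 : HasDerivAt (fun η : ℝ => z (s, b) + η * v (s, b)) (v (s, b)) 0 := by
      simpa using ((hasDerivAt_id (0:ℝ)).mul_const (v (s, b))).const_add (z (s, b))
    simpa using h1.exp
  have hden0 : (∑ b : A, Real.exp (z (s, b) + 0 * v (s, b))) ≠ 0 := by
    have := den_pos (z + (0:ℝ) • v) s
    simpa [Pi.add_apply, Pi.smul_apply, smul_eq_mul] using this.ne'
  have h := hnum.fun_div hden hden0
  have hfun : (fun η : ℝ => Real.exp (z (s, a) + η * v (s, a)) /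
      ∑ b : A, Real.exp (z (s, b) + η * v (s, b))) = fun η : ℝ => pol (z + η • v) s a := by
    funext η
    simp [pol, Pi.add_apply, Pi.smul_apply, smul_eq_mul]
  rw [hfun] at h
  refine h.congr_deriv ?_; symm
  set D := ∑ b : A, Real.exp (z (s, b)) with hD
  set Nv := ∑ b : A, Real.exp (z (s, b)) * v (s, b) with hNv
  have hD0 : D ≠ 0 := (den_pos z s).ne'
  have hsum : ∑ b : A, pol z s b * v (s, b) = Nv / D := by
    rw [hNv, Finset.sum_div]
    exact Finset.sum_congr rfl fun b _ => by rw [pol]; ring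
  simp only [pol, centered, hsum, zero_mul, add_zero, ← hD]
  field_simp
  rw [← Finset.sum_div, ← hNv]
  field_simp

lemma hasDerivAt_log_pol (z v : S × A → ℝ) (s : S) (a : A) :
    HasDerivAt (fun η : ℝ => Real.log (pol (z + η • v) s a)) (centered z v s a) 0 := by
  have h := (hasDerivAt_pol z v s a).log (by
    have := pol_pos (z + (0:ℝ) • v) s a
    simpa using this.ne')
  have hp : pol (z + (0:ℝ) • v) s a = pol z s a := by norm_num
  rw [hp] at h
  have hpz : pol z s a ≠ 0 := (pol_pos z s a).ne'
  convert h using 1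
  field_simp

lemma hasDerivAt_sumlog {T : ℕ} (δ : S → A → S) (s0 : S) (z v : S × A → ℝ) (y : Fin T → A) :
    HasDerivAt (fun η : ℝ => ∑ t : Fin T, Real.log (pol (z + η • v) (st δ s0 y t) (y t)))
      (score δ s0 z v y) 0 := by
  rw [score]
  exact HasDerivAt.fun_sum fun t _ => hasDerivAt_log_pol z v _ _

lemma hasDerivAt_nll {T : ℕ} (δ : S → A → S) (s0 : S) (z v : S × A → ℝ) (y : Fin T → A) :
    HasDerivAt (fun η : ℝ => nll δ s0 (z + η • v) y)
      (-(1 / (T : ℝ)) * score δ s0 z v y) 0 := by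
  simp only [nll]
  exact (hasDerivAt_sumlog δ s0 z v y).const_mul _

lemma hasDerivAt_traj {T : ℕ} (δ : S → A → S) (s0 : S) (z v : S × A → ℝ) (y : Fin T → A) :
    HasDerivAt (fun η : ℝ => traj δ s0 (z + η • v) y)
      (traj δ s0 z y * score δ s0 z v y) 0 := by
  have h := (hasDerivAt_sumlog δ s0 z v y).exp
  have hfun : (fun η : ℝ => Real.exp (∑ t : Fin T, Real.log (pol (z + η • v) (st δ s0 y t) (y t))))
      = fun η : ℝ => traj δ s0 (z + η • v) y := by
    funext η
    rw [Real.exp_sum, traj]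
    exact Finset.prod_congr rfl fun t _ => Real.exp_log (pol_pos _ _ _)
  rw [hfun] at h
  convert h using 2
  rw [Real.exp_sum, traj]
  refine Finset.prod_congr rfl fun t _ => ?_
  rw [Real.exp_log (pol_pos _ _ _)]
  norm_num

end AuxProof

/-- **Theorem 1 (derivative form).** The function `η ↦ E_{P_{z+ηv}}[ℓ_{z+ηv} | E]` is
differentiable at `η = 0`, with derivative
`−E_{P_z}[(1/T)·Ψ_{z,v} | E] + Cov_{P_z(·|E)}(ℓ_z, Ψ_{z,v})`. -/
theorem stmt_1 {S A : Type*} [Fintype S] [Fintype A] [Nonempty A]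
    (δ : S → A → S) (s0 : S) (T : ℕ) (hT : 1 ≤ T)
    (z v : S × A → ℝ) (E : Finset (Fin T → A)) (hE : E.Nonempty) :
    HasDerivAt (fun η : ℝ => condExp δ s0 (z + η • v) E (nll δ s0 (z + η • v)))
      (-condExp δ s0 z E (fun y => (1 / (T : ℝ)) * score δ s0 z v y)
        + condCov δ s0 z E (nll δ s0 z) (score δ s0 z v)) 0 := by
    classical
  have hDpos : 0 < ∑ y ∈ E, traj δ s0 z y :=
    Finset.sum_pos (fun y _ => traj_pos δ s0 z y) hE
  have hD0 : (∑ y ∈ E, traj δ s0 z y) ≠ 0 := hDpos.ne'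
  have hz0 : z + (0:ℝ) • v = z := by simp
  have hDen : HasDerivAt (fun η : ℝ => ∑ y ∈ E, traj δ s0 (z + η • v) y)
      (∑ y ∈ E, traj δ s0 z y * score δ s0 z v y) 0 :=
    HasDerivAt.fun_sum fun y _ => hasDerivAt_traj δ s0 z v y
  have hNum : HasDerivAt (fun η : ℝ => ∑ y ∈ E, traj δ s0 (z + η • v) y * nll δ s0 (z + η • v) y)
      (∑ y ∈ E, (traj δ s0 z y * score δ s0 z v y * nll δ s0 z y +
        traj δ s0 z y * (-(1 / (T : ℝ)) * score δ s0 z v y))) 0 := by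
    refine HasDerivAt.fun_sum fun y _ => ?_
    have h := (hasDerivAt_traj δ s0 z v y).fun_mul (hasDerivAt_nll δ s0 z v y)
    simpa [hz0] using h
  have hden0' : (∑ y ∈ E, traj δ s0 (z + (0:ℝ) • v) y) ≠ 0 := by rwa [hz0]
  have h := hNum.fun_div hDen hden0'
  have hfun : (fun η : ℝ => (∑ y ∈ E, traj δ s0 (z + η • v) y * nll δ s0 (z + η • v) y) /
      ∑ y ∈ E, traj δ s0 (z + η • v) y)
      = fun η : ℝ => condExp δ s0 (z + η • v) E (nll δ s0 (z + η • v)) := by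
    funext η; rw [condExp]
  rw [hfun, hz0] at h
  refine h.congr_deriv ?_; symm
  set D := ∑ y ∈ E, traj δ s0 z y with hD
  set N := ∑ y ∈ E, traj δ s0 z y * nll δ s0 z y with hN
  set Aa := ∑ y ∈ E, traj δ s0 z y * score δ s0 z v y with hA
  set B := ∑ y ∈ E, traj δ s0 z y * (nll δ s0 z y * score δ s0 z v y) with hB
  have hsplit : ∑ y ∈ E, (traj δ s0 z y * score δ s0 z v y * nll δ s0 z y +
      traj δ s0 z y * (-(1 / (T : ℝ)) * score δ s0 z v y))
      = B - (1 / (T : ℝ)) * Aa := by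
    rw [hB, hA, Finset.mul_sum, ← Finset.sum_sub_distrib]
    exact Finset.sum_congr rfl fun y _ => by ring
  have hC : ∑ y ∈ E, traj δ s0 z y * ((1 / (T : ℝ)) * score δ s0 z v y)
      = (1 / (T : ℝ)) * Aa := by
    rw [hA, Finset.mul_sum]
    exact Finset.sum_congr rfl fun y _ => by ring
  rw [hsplit]
  simp only [condCov, condExp, ← hD, ← hN, ← hA, ← hB, hC]
  field_simp
  ring
end
end

section
/- Let ι be a finite nonempty type, z, v : ι → ℝ, and j ∈ ι. Then, as η → 0, log σ(z + ηv)_j − log σ(z)_j = η·(v_j − Σ_{b ∈ ι} σ(z)_b · v_b) + O(η²); that is, η ↦ log σ(z + ηv)_j − log σ(z)_j − η·(v_j − Σ_{b ∈ ι} σ(z)_b · v_b) is O(η²) as η → 0. -/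
open Finset Filter Asymptotics

noncomputable section

/-- Softmax: `σ(z)_j = exp(z_j) / ∑_b exp(z_b)`. -/
def softmax {ι : Type*} [Fintype ι] (z : ι → ℝ) (j : ι) : ℝ :=
  Real.exp (z j) / ∑ b : ι, Real.exp (z b)

lemma analyticAt_rlog {x : ℝ} (hx : x ≠ 0) : AnalyticAt ℝ Real.log x :=
  (Real.contDiffAt_log.2 hx).analyticAt

/-- First-order log-softmax expansion: as `η → 0`,
`log σ(z + ηv)_j − log σ(z)_j = η·(v_j − ∑_b σ(z)_b·v_b) + O(η²)`. -/
theorem stmt_3 {ι : Type*} [Fintype ι] [Nonempty ι] (z v : ι → ℝ) (j : ι) :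
    (fun η : ℝ => Real.log (softmax (z + η • v) j) - Real.log (softmax z j)
        - η * (v j - ∑ b : ι, softmax z b * v b))
      =O[nhds (0 : ℝ)] (fun η : ℝ => η ^ 2) := by
  set S : ℝ → ℝ := fun η => ∑ b : ι, Real.exp (z b + η * v b) with hS
  have hSpos : ∀ η, 0 < S η := fun η =>
    Finset.sum_pos (fun b _ => Real.exp_pos _) Finset.univ_nonempty
  set f : ℝ → ℝ := fun η => Real.log (S η) with hf
  -- S is analytic at 0
  have hSa : AnalyticAt ℝ S 0 := by
    apply Finset.analyticAt_fun_sum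
    intro b _
    exact analyticAt_rexp.comp (analyticAt_const.add ((analyticAt_id).mul analyticAt_const))
  have hfa : AnalyticAt ℝ f 0 := (analyticAt_rlog (hSpos 0).ne').comp hSa
  -- derivative of f at 0
  have hSd : HasDerivAt S (∑ b : ι, Real.exp (z b) * v b) 0 := by
    have h : ∀ b ∈ Finset.univ, HasDerivAt (fun η : ℝ => Real.exp (z b + η * v b))
        (Real.exp (z b) * v b) 0 := by
      intro b _
      simpa using (((hasDerivAt_id (0 : ℝ)).mul_const (v b)).const_add (z b)).exp
    exact HasDerivAt.fun_sum h
  have hfd : HasDerivAt f ((∑ b : ι, Real.exp (z b) * v b) / S 0) 0 := hSd.log (hSpos 0).ne'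
  set D : ℝ := (∑ b : ι, Real.exp (z b) * v b) / S 0 with hD
  -- the key Taylor estimate
  obtain ⟨p, hp⟩ := hfa
  have hO := hp.isBigO_sub_partialSum_pow 2
  have hps : ∀ y : ℝ, p.partialSum 2 y = f 0 + y * D := by
    intro y
    have h0 : p.coeff 0 = f 0 := hp.coeff_zero _
    have h1 : p.coeff 1 = D := by
      have hd : deriv f 0 = p.coeff 1 := hp.deriv
      rw [← hd, hfd.deriv]
    simp [FormalMultilinearSeries.partialSum, Finset.sum_range_succ, h0, h1]
  -- rewrite the target function
  have hEq : ∀ η : ℝ, Real.log (softmax (z + η • v) j) - Real.log (softmax z j)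
        - η * (v j - ∑ b : ι, softmax z b * v b)
      = -(f (0 + η) - p.partialSum 2 η) := by
    intro η
    have hsum : (∑ b : ι, softmax z b * v b) = D := by
      rw [hD]
      rw [eq_div_iff (hSpos 0).ne', Finset.sum_mul]
      apply Finset.sum_congr rfl
      intro b _
      have hS0 : S 0 = ∑ b : ι, Real.exp (z b) := by simp [hS]
      have hsm : softmax z b = Real.exp (z b) / S 0 := by simp [softmax, hS0]
      rw [hsm]
      field_simp
      field_simp [(hSpos 0).ne']
    have hl1 : Real.log (softmax (z + η • v) j) = z j + η * v j - f η := by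
      unfold softmax
      rw [Real.log_div (Real.exp_ne_zero _) (by
        simpa [hS] using (hSpos η).ne'), Real.log_exp]
      simp [hf, hS, Pi.add_apply, Pi.smul_apply, smul_eq_mul, mul_comm]
    have hl0 : Real.log (softmax z j) = z j - f 0 := by
      unfold softmax
      rw [Real.log_div (Real.exp_ne_zero _) (by
        simpa [hS] using (hSpos 0).ne'), Real.log_exp]
      simp [hf, hS]
    rw [hl1, hl0, hps, hsum, zero_add]
    ring
  have hO2 : (fun η : ℝ => -(f (0 + η) - p.partialSum 2 η)) =O[nhds 0]
      (fun η : ℝ => η ^ 2) := by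
    refine (hO.neg_left).trans ?_
    apply IsBigO.of_bound 1
    filter_upwards with y
    simp [abs_pow, sq_abs]
  exact hO2.congr' (Eventually.of_forall fun η => (hEq η).symm) (Eventually.of_forall fun _ => rfl)
end
end

section
/- Let ε > 0, A ∈ ℝ, c > 0, and let π : ℝ → ℝ be differentiable at θ₀ with π(θ₀) > 0. Define ρ(θ) = π(θ)/c and clip_ε(x) = min(max(x, 1−ε), 1+ε), and assume ρ(θ₀) ≠ 1−ε and ρ(θ₀) ≠ 1+ε. Then the function θ ↦ min(ρ(θ)·A, clip_ε(ρ(θ))·A) is differentiable at θ₀ with derivative m·A·ρ(θ₀)·(derivative of log ∘ π at θ₀), where m = 0 if (A ≥ 0 and ρ(θ₀) > 1+ε) or (A ≤ 0 and ρ(θ₀) < 1−ε), and m = 1 otherwise. -/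
noncomputable section

/-- PPO clipping function `clip_ε(x) = min(max(x, 1−ε), 1+ε)`. -/
def clip (ε x : ℝ) : ℝ := min (max x (1 - ε)) (1 + ε)

/-- Gradient of the PPO clipped term through the importance ratio `ρ(θ) = π(θ)/c`:
`d/dθ min(ρ(θ)·A, clip_ε(ρ(θ))·A) = m·A·ρ(θ₀)·(log ∘ π)'(θ₀)`, where the clipping
mask `m` is `0` when the clip is active and `1` otherwise. -/
theorem stmt_12 (ε A c : ℝ) (hε : 0 < ε) (hc : 0 < c)
    (π : ℝ → ℝ) (θ₀ : ℝ) (hπ : DifferentiableAt ℝ π θ₀) (hpos : 0 < π θ₀)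
    (h1 : π θ₀ / c ≠ 1 - ε) (h2 : π θ₀ / c ≠ 1 + ε) :
    HasDerivAt (fun θ : ℝ => min ((π θ / c) * A) (clip ε (π θ / c) * A))
      ((if (0 ≤ A ∧ 1 + ε < π θ₀ / c) ∨ (A ≤ 0 ∧ π θ₀ / c < 1 - ε)
          then (0 : ℝ) else 1)
        * A * (π θ₀ / c) * deriv (fun θ => Real.log (π θ)) θ₀) θ₀ := by
  have hρ : HasDerivAt (fun θ => π θ / c) (deriv π θ₀ / c) θ₀ :=
    hπ.hasDerivAt.div_const c
  have hlog : HasDerivAt (fun θ => Real.log (π θ)) (deriv π θ₀ / π θ₀) θ₀ :=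
    hπ.hasDerivAt.log hpos.ne'
  have hL : deriv (fun θ => Real.log (π θ)) θ₀ = deriv π θ₀ / π θ₀ := hlog.deriv
  have hslope : HasDerivAt (fun θ => (π θ / c) * A)
      ((1 : ℝ) * A * (π θ₀ / c) * deriv (fun θ => Real.log (π θ)) θ₀) θ₀ := by
    have h := hρ.mul_const A
    refine h.congr_deriv ?_
    rw [hL]
    field_simp
  have hcont : Filter.Tendsto (fun θ => π θ / c) (nhds θ₀) (nhds (π θ₀ / c)) :=
    (hπ.continuousAt.div_const c).tendsto
  rcases lt_trichotomy (π θ₀ / c) (1 - ε) with hlo | heq | hmid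
  · -- ρ₀ < 1 - ε
    have hev : ∀ᶠ θ in nhds θ₀, π θ / c < 1 - ε :=
      hcont.eventually_lt_const hlo
    rcases le_or_gt A 0 with hA | hA
    · -- mask 0, f eventually constant (1-ε)*A
      rw [if_pos (Or.inr ⟨hA, hlo⟩)]
      have hconst : HasDerivAt (fun _ : ℝ => (1 - ε) * A)
          (0 * A * (π θ₀ / c) * deriv (fun θ => Real.log (π θ)) θ₀) θ₀ := by
        simpa using hasDerivAt_const θ₀ ((1 - ε) * A)
      refine hconst.congr_of_eventuallyEq (hev.mono fun θ hθ => ?_)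
      have hclip : clip ε (π θ / c) = 1 - ε := by
        unfold clip
        rw [max_eq_right hθ.le, min_eq_left (by linarith)]
      simp only [hclip, min_eq_right (mul_le_mul_of_nonpos_right hθ.le hA)]
    · -- mask 1, f eventually ρ·A
      rw [if_neg (by push_neg; exact ⟨fun _ => by linarith, fun hA' => absurd hA' (not_le.mpr hA)⟩)]
      refine hslope.congr_of_eventuallyEq (hev.mono fun θ hθ => ?_)
      have hclip : clip ε (π θ / c) = 1 - ε := by
        unfold clip
        rw [max_eq_right hθ.le, min_eq_left (by linarith)]
      simp only [hclip, min_eq_left (mul_le_mul_of_nonneg_right hθ.le hA.le)]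
  · exact absurd heq h1
  · rcases lt_trichotomy (π θ₀ / c) (1 + ε) with hhi | heq | hhi
    · -- 1 - ε < ρ₀ < 1 + ε : clip inactive, f eventually ρ·A
      have hev : ∀ᶠ θ in nhds θ₀, 1 - ε < π θ / c ∧ π θ / c < 1 + ε :=
        (hcont.eventually_const_lt hmid).and (hcont.eventually_lt_const hhi)
      rw [if_neg (by push_neg; exact ⟨fun _ => by linarith, fun _ => by linarith⟩)]
      refine hslope.congr_of_eventuallyEq (hev.mono fun θ hθ => ?_)
      have hclip : clip ε (π θ / c) = π θ / c := by
        unfold clip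
        rw [max_eq_left hθ.1.le, min_eq_left hθ.2.le]
      simp only [hclip, min_self]
    · exact absurd heq h2
    · -- ρ₀ > 1 + ε
      have hev : ∀ᶠ θ in nhds θ₀, 1 + ε < π θ / c :=
        hcont.eventually_const_lt hhi
      rcases le_or_gt 0 A with hA | hA
      · -- mask 0, f eventually constant (1+ε)*A
        rw [if_pos (Or.inl ⟨hA, hhi⟩)]
        have hconst : HasDerivAt (fun _ : ℝ => (1 + ε) * A)
            (0 * A * (π θ₀ / c) * deriv (fun θ => Real.log (π θ)) θ₀) θ₀ := by
          simpa using hasDerivAt_const θ₀ ((1 + ε) * A)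
        refine hconst.congr_of_eventuallyEq (hev.mono fun θ hθ => ?_)
        have hclip : clip ε (π θ / c) = 1 + ε := by
          unfold clip
          rw [max_eq_left (by linarith), min_eq_right hθ.le]
        simp only [hclip, min_eq_right (mul_le_mul_of_nonneg_right hθ.le hA)]
      · -- mask 1, f eventually ρ·A
        rw [if_neg (by push_neg; exact ⟨fun hA' => absurd hA' (not_le.mpr hA), fun _ => by linarith⟩)]
        refine hslope.congr_of_eventuallyEq (hev.mono fun θ hθ => ?_)
        have hclip : clip ε (π θ / c) = 1 + ε := by
          unfold clip
          rw [max_eq_left (by linarith), min_eq_right hθ.le]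
        simp only [hclip, min_eq_left (mul_le_mul_of_nonpos_right hθ.le hA.le)]
end
end
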